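/- arXiv:1304.0801 — 2 statements merged into one kernel-verified Lean document; each statement's English description precedes it below -/
import Mathlib

section
/- Let p(z)=Σ_{k≥0} a_k z^k and q(z)=Σ_{k≥0} b_k z^k be real formal power series with a_0 = 1. Define recursively p_0 := p, p_{−1} := q, β_m := the 2×2 minor of H(p_m, p_{m−1}) on rows {2,3} and columns {2,3}, and, whenever β_m ≠ 0, p_{m+1}(z) := (p_{m−1}(z) − p_{m−1}(0)·p_m(z))/(β_m z). If k ≥ 3 and β_0, β_1, …, β_{k−4} are all nonzero (so that β_0,…,β_{k−3} are defined), then the principal minor H^{(k)} of H(p,q) on rows and columns 2,…,k satisfies H^{(k)} = ∏_{i=0}^{k−3} β_i^{⌊(k−1−i)/2⌋}. -/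
noncomputable section

/-- Coefficient extraction from a sequence, zero for negative indices. -/
def coeffZ (f : ℕ → ℝ) (n : ℤ) : ℝ := if 0 ≤ n then f n.toNat else 0

/-- The infinite Hurwitz-type matrix `H(u,v)` of the pair of series with coefficient
sequences `u`, `v`, using 0-based indices: row `2j` is `(…, v_{c-j}, …)` and row `2j+1`
is `(…, u_{c-j-1}, …)`. -/
def Hmat (u v : ℕ → ℝ) (r c : ℕ) : ℝ :=
  if r % 2 = 0 then coeffZ v ((c : ℤ) - (r / 2 : ℕ)) else coeffZ u ((c : ℤ) - (r / 2 : ℕ) - 1)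

/-- The sequence of formal power series from the Euclid-type algorithm, with the index
shifted by one: `pSeq a b 0 = q = p₋₁`, `pSeq a b 1 = p = p₀`, and
`pSeq a b (m+2) = p_{m+1}`, where
`p_{m+1}(z) = (p_{m-1}(z) - p_{m-1}(0)·p_m(z)) / (β_m z)` and `β_m` is the 2×2 minor of
`H(p_m, p_{m-1})` on rows `{2,3}` and columns `{2,3}` (1-based), which equals
`(p_m)₀·(p_{m-1})₁ - (p_m)₁·(p_{m-1})₀`. -/
def pSeq (a b : ℕ → ℝ) : ℕ → ℕ → ℝ
  | 0 => b
  | 1 => a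
  | m + 2 => fun k =>
      (pSeq a b m (k + 1) - pSeq a b m 0 * pSeq a b (m + 1) (k + 1)) /
        (pSeq a b (m + 1) 0 * pSeq a b m 1 - pSeq a b (m + 1) 1 * pSeq a b m 0)

/-- `betaSeq a b m` is `β_m`, the 2×2 minor of `H(p_m, p_{m-1})` on rows `{2,3}` and
columns `{2,3}` (1-based). -/
def betaSeq (a b : ℕ → ℝ) (m : ℕ) : ℝ :=
  pSeq a b (m + 1) 0 * pSeq a b m 1 - pSeq a b (m + 1) 1 * pSeq a b m 0

lemma Hmat_succ (u v : ℕ → ℝ) (l m : ℕ) :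
    Hmat u v (l + 1) (m + 1) =
      if l % 2 = 0 then coeffZ u ((m : ℤ) - (l / 2 : ℕ))
      else coeffZ v ((m : ℤ) - (l / 2 : ℕ)) := by
  unfold Hmat
  rcases Nat.even_or_odd l with ⟨t, ht⟩ | ⟨t, ht⟩
  · subst ht
    have h1 : (t + t + 1) % 2 = 1 := by omega
    have h2 : (t + t + 1) / 2 = t := by omega
    have h3 : (t + t) % 2 = 0 := by omega
    have h4 : (t + t) / 2 = t := by omega
    rw [h1, h2, h3, h4, if_neg (by omega), if_pos rfl]
    congr 1
    push_cast
    ring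
  · subst ht
    have h1 : (2 * t + 1 + 1) % 2 = 0 := by omega
    have h2 : (2 * t + 1 + 1) / 2 = t + 1 := by omega
    have h3 : (2 * t + 1) % 2 = 1 := by omega
    have h4 : (2 * t + 1) / 2 = t := by omega
    rw [h1, h2, h3, h4, if_pos rfl, if_neg (by omega)]
    congr 1
    push_cast
    ring

lemma prod_even_pow (β : ℝ) : ∀ n : ℕ,
    (∏ i ∈ Finset.range n, (if i % 2 = 0 then β else 1)) = β ^ ((n + 1) / 2)
  | 0 => by simp
  | n + 1 => by
    rw [Finset.prod_range_succ, prod_even_pow β n]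
    rcases Nat.even_or_odd n with ⟨t, ht⟩ | ⟨t, ht⟩
    · rw [if_pos (by omega)]
      have h1 : (n + 1) / 2 = t := by omega
      have h2 : (n + 2) / 2 = t + 1 := by omega
      rw [h1, h2, pow_succ]
    · rw [if_neg (by omega)]
      have h1 : (n + 1) / 2 = t + 1 := by omega
      have h2 : (n + 2) / 2 = t + 1 := by omega
      rw [h1, h2, mul_one]

lemma coeff_step (u v : ℕ → ℝ) (β : ℝ) (hu : u 0 = 1) (hβ : β ≠ 0) (t : ℤ) :
    coeffZ v t - v 0 * coeffZ u t
      = β * coeffZ (fun k => (v (k + 1) - v 0 * u (k + 1)) / β) (t - 1) := by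
  unfold coeffZ
  split_ifs with h1 h2 h2
  · have ht : (t - 1).toNat + 1 = t.toNat := by omega
    beta_reduce
    rw [ht, mul_div_cancel₀ _ hβ]
  · have ht : t.toNat = 0 := by omega
    rw [ht, hu]
    ring
  · omega
  · ring

lemma key (n : ℕ) (u v : ℕ → ℝ) (hu : u 0 = 1)
    (hβ : u 0 * v 1 - u 1 * v 0 ≠ 0) :
    (Matrix.of fun l m : Fin (n + 1) => Hmat u v ((l : ℕ) + 1) ((m : ℕ) + 1)).det
      = (u 0 * v 1 - u 1 * v 0) ^ ((n + 1) / 2) *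
        (Matrix.of fun l m : Fin n =>
          Hmat (fun k => (v (k + 1) - v 0 * u (k + 1)) / (u 0 * v 1 - u 1 * v 0)) u
            ((l : ℕ) + 1) ((m : ℕ) + 1)).det := by
  set β : ℝ := u 0 * v 1 - u 1 * v 0 with hβdef
  set w : ℕ → ℝ := fun k => (v (k + 1) - v 0 * u (k + 1)) / β with hwdef
  set M : Matrix (Fin (n + 1)) (Fin (n + 1)) ℝ :=
    Matrix.of fun l m => Hmat u v ((l : ℕ) + 1) ((m : ℕ) + 1) with hM
  set M'' : Matrix (Fin (n + 1)) (Fin (n + 1)) ℝ :=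
    Matrix.of fun l m =>
      if (l : ℕ) % 2 = 1 then β * coeffZ w ((m : ℤ) - ((l : ℕ) / 2 : ℕ) - 1)
      else coeffZ u ((m : ℤ) - ((l : ℕ) / 2 : ℕ)) with hM''
  set E : Matrix (Fin (n + 1)) (Fin (n + 1)) ℝ :=
    Matrix.of fun l m =>
      (if l = m then (1 : ℝ) else 0) +
        (if (l : ℕ) % 2 = 1 ∧ (m : ℕ) + 1 = (l : ℕ) then -(v 0) else 0) with hE
  have hEdet : E.det = 1 := by
    have htri : E.BlockTriangular OrderDual.toDual := by
      intro i j hij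
      have hij' : (i : ℕ) < (j : ℕ) := hij
      show (if i = j then (1 : ℝ) else 0) + _ = 0
      rw [if_neg (Fin.ne_of_val_ne (by omega)), if_neg (by rintro ⟨-, h⟩; omega)]
      norm_num
    rw [Matrix.det_of_lowerTriangular E htri]
    have : ∀ i : Fin (n + 1), E i i = 1 := by
      intro i
      show (if i = i then (1 : ℝ) else 0) + _ = 1
      rw [if_pos rfl, if_neg (by omega)]
      norm_num
    simp [this]
  have hEM : E * M = M'' := by
    ext l m
    rw [Matrix.mul_apply]
    have hterm : ∀ j : Fin (n + 1), E l j * M j m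
        = (if l = j then M j m else 0) +
          (if (l : ℕ) % 2 = 1 ∧ (j : ℕ) + 1 = (l : ℕ) then -(v 0) * M j m else 0) := by
      intro j
      show ((if l = j then (1 : ℝ) else 0) + _) * M j m = _
      split_ifs <;> ring
    rw [Finset.sum_congr rfl fun j _ => hterm j, Finset.sum_add_distrib]
    have hMe : ∀ j : Fin (n + 1), M j m
        = if (j : ℕ) % 2 = 0 then coeffZ u ((m : ℤ) - ((j : ℕ) / 2 : ℕ))
          else coeffZ v ((m : ℤ) - ((j : ℕ) / 2 : ℕ)) := fun j => Hmat_succ u v _ _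
    rw [Finset.sum_ite_eq Finset.univ l (fun j => M j m)]
    rw [if_pos (Finset.mem_univ l)]
    by_cases hl : (l : ℕ) % 2 = 1
    · have hl1 : 1 ≤ (l : ℕ) := by omega
      have hsum : ∑ j : Fin (n + 1),
          (if (l : ℕ) % 2 = 1 ∧ (j : ℕ) + 1 = (l : ℕ) then -(v 0) * M j m else 0)
          = -(v 0) * M ⟨(l : ℕ) - 1, by omega⟩ m := by
        rw [Finset.sum_eq_single (⟨(l : ℕ) - 1, by omega⟩ : Fin (n + 1))]
        · rw [if_pos ⟨hl, by simp; omega⟩]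
        · intro b _ hb
          rw [if_neg]
          rintro ⟨-, hb1⟩
          exact hb (by apply Fin.ext; simp; omega)
        · simp
      rw [hsum, hMe, hMe]
      have hl' : ((l : ℕ) - 1) % 2 = 0 := by omega
      have hl'' : ((l : ℕ) - 1) / 2 = (l : ℕ) / 2 := by omega
      rw [if_neg (by omega), if_pos hl', hl'']
      show coeffZ v _ + -(v 0) * coeffZ u _ = M'' l m
      have := coeff_step u v β hu hβ ((m : ℤ) - ((l : ℕ) / 2 : ℕ))
      show coeffZ v _ + -(v 0) * coeffZ u _
        = if (l : ℕ) % 2 = 1 then β * coeffZ w ((m : ℤ) - ((l : ℕ) / 2 : ℕ) - 1)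
          else coeffZ u ((m : ℤ) - ((l : ℕ) / 2 : ℕ))
      rw [if_pos hl, ← hwdef] at *
      linarith [this]
    · have hsum : ∑ j : Fin (n + 1),
          (if (l : ℕ) % 2 = 1 ∧ (j : ℕ) + 1 = (l : ℕ) then -(v 0) * M j m else 0) = 0 := by
        apply Finset.sum_eq_zero
        intro j _
        rw [if_neg (by tauto)]
      rw [hsum, add_zero, hMe]
      show (if (l : ℕ) % 2 = 0 then _ else _) = M'' l m
      show _ = if (l : ℕ) % 2 = 1 then β * coeffZ w ((m : ℤ) - ((l : ℕ) / 2 : ℕ) - 1)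
          else coeffZ u ((m : ℤ) - ((l : ℕ) / 2 : ℕ))
      rw [if_pos (by omega), if_neg hl]
  have hdet1 : M.det = M''.det := by
    rw [← hEM, Matrix.det_mul, hEdet, one_mul]
  rw [hdet1, Matrix.det_succ_column_zero, Finset.sum_eq_single (0 : Fin (n + 1))]
  · have h00 : M'' 0 0 = 1 := by
      simp only [hM'', Matrix.of_apply, Fin.val_zero]
      norm_num [coeffZ, hu]
    rw [h00]
    simp only [Fin.val_zero, pow_zero, one_mul, Fin.succAbove_zero]
    have hsub : M''.submatrix Fin.succ Fin.succ
        = Matrix.of fun i j : Fin n => (if (i : ℕ) % 2 = 0 then β else 1) *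
            (Matrix.of fun i j : Fin n => Hmat w u ((i : ℕ) + 1) ((j : ℕ) + 1)) i j := by
      ext i j
      simp only [Matrix.submatrix_apply, hM'', Matrix.of_apply, Fin.val_succ]
      rw [Hmat_succ]
      rcases Nat.even_or_odd (i : ℕ) with ⟨t, ht⟩ | ⟨t, ht⟩
      · have e1 : ((i : ℕ) + 1) % 2 = 1 := by omega
        have e2 : ((i : ℕ) + 1) / 2 = t := by omega
        have e3 : (i : ℕ) % 2 = 0 := by omega
        have e4 : (i : ℕ) / 2 = t := by omega
        rw [e1, e2, e3, e4, if_pos rfl, if_pos rfl, if_pos rfl]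
        congr 2
        push_cast
        ring
      · have e1 : ((i : ℕ) + 1) % 2 = 0 := by omega
        have e2 : ((i : ℕ) + 1) / 2 = t + 1 := by omega
        have e3 : (i : ℕ) % 2 = 1 := by omega
        have e4 : (i : ℕ) / 2 = t := by omega
        rw [e1, e2, e3, e4, if_neg (by omega), if_neg (by omega), if_neg (by omega),
          one_mul]
        congr 1
        push_cast
        ring
    rw [hsub, Matrix.det_mul_column]
    congr 1
    rw [Fin.prod_univ_eq_prod_range (fun i => if i % 2 = 0 then β else 1) n,
      prod_even_pow]
  · intro b _ hb
    have hb0 : M'' b 0 = 0 := by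
      simp only [hM'', Matrix.of_apply, Fin.val_zero]
      have hbne : (b : ℕ) ≠ 0 := fun h => hb (Fin.ext h)
      split_ifs with h
      · rw [coeffZ, if_neg (by omega), mul_zero]
      · rw [coeffZ, if_neg (by omega)]
    rw [hb0]
    ring
  · simp

lemma pSeq_succ_zero (a b : ℕ → ℝ) (m : ℕ) (h1 : pSeq a b (m + 1) 0 = 1)
    (hb : betaSeq a b m ≠ 0) : pSeq a b (m + 2) 0 = 1 := by
  have h : pSeq a b (m + 2) 0
      = (pSeq a b m 1 - pSeq a b m 0 * pSeq a b (m + 1) 1) / betaSeq a b m := rfl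
  rw [h, show pSeq a b m 1 - pSeq a b m 0 * pSeq a b (m + 1) 1 = betaSeq a b m from by
    rw [betaSeq, h1]; ring, div_self hb]

lemma mainLemma (a b : ℕ → ℝ) : ∀ n m : ℕ, pSeq a b (m + 1) 0 = 1 →
    (∀ i : ℕ, i + 3 ≤ n → betaSeq a b (m + i) ≠ 0) →
    (Matrix.of fun l c : Fin n =>
      Hmat (pSeq a b (m + 1)) (pSeq a b m) ((l : ℕ) + 1) ((c : ℕ) + 1)).det
      = ∏ i ∈ Finset.range (n - 1), betaSeq a b (m + i) ^ ((n - i) / 2)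
  | 0, m, hm, hβ => by simp
  | 1, m, hm, hβ => by
      rw [show (1 : ℕ) - 1 = 0 from rfl]
      rw [Matrix.det_fin_one]
      simp [Hmat, coeffZ, hm]
  | 2, m, hm, hβ => by
      rw [Matrix.det_fin_two]
      simp only [Matrix.of_apply]
      norm_num [Hmat, coeffZ, betaSeq]
  | (n + 3), m, hm, hβ => by
      have hb0 : betaSeq a b m ≠ 0 := by
        have := hβ 0 (by omega); rwa [Nat.add_zero] at this
      rw [key (n + 2) _ _ hm hb0]
      have hw : (fun k => (pSeq a b m (k + 1) - pSeq a b m 0 * pSeq a b (m + 1) (k + 1)) /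
          (pSeq a b (m + 1) 0 * pSeq a b m 1 - pSeq a b (m + 1) 1 * pSeq a b m 0))
          = pSeq a b (m + 2) := rfl
      rw [hw]
      rw [mainLemma a b (n + 2) (m + 1)
        (pSeq_succ_zero a b m hm (hβ 0 (by omega)))
        (fun i hi => by
          have := hβ (i + 1) (by omega)
          rwa [show m + (i + 1) = m + 1 + i from by ring] at this)]
      have hb : pSeq a b (m + 1) 0 * pSeq a b m 1 - pSeq a b (m + 1) 1 * pSeq a b m 0
          = betaSeq a b m := rfl
      rw [hb]
      rw [show n + 3 - 1 = n + 1 + 1 from rfl, Finset.prod_range_succ']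
      rw [mul_comm]
      congr 1
      apply Finset.prod_congr rfl
      intro i hi
      rw [show m + (i + 1) = m + 1 + i from by ring,
        show n + 3 - (i + 1) = n + 2 - i from by omega]

/-- If `k ≥ 3` and `β₀, …, β_{k-4}` are all nonzero, then the principal minor `H^{(k)}`
of `H(p,q)` (on rows and columns `2,…,k`, 1-based; here rows and columns `1,…,k-1`,
0-based) equals `∏_{i=0}^{k-3} β_i^{⌊(k-1-i)/2⌋}`. -/
theorem stmt6 (a b : ℕ → ℝ) (ha0 : a 0 = 1) (k : ℕ) (hk : 3 ≤ k)
    (hβ : ∀ i : ℕ, i + 4 ≤ k → betaSeq a b i ≠ 0) :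
    (Matrix.of fun l m : Fin (k - 1) => Hmat a b ((l : ℕ) + 1) ((m : ℕ) + 1)).det =
      ∏ i ∈ Finset.range (k - 2), betaSeq a b i ^ ((k - 1 - i) / 2) := by
  have h := mainLemma a b (k - 1) 0 ha0 (fun i hi => by simpa using hβ i (by omega))
  simpa [show pSeq a b 1 = a from rfl, show pSeq a b 0 = b from rfl, Nat.sub_sub] using h

end
end

section
/- Let p, q and g be real formal power series with g(0) = 1, and let p̃ := p/g and q̃ := q/g be the formal power series quotients (so p = p̃·g and q = q̃·g). Then H(p,q) = H(p̃,q̃) · T(g), where the matrix product is entrywise well-defined because each column of the upper-triangular Toeplitz matrix T(g) has only finitely many nonzero entries. -/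
noncomputable section

/-- The upper-triangular Toeplitz matrix `T(g)` of a coefficient sequence `g`
(0-based indices): `T(g)_{r,c} = g_{c-r}` (zero when `c < r`). -/
def Tmat (g : ℕ → ℝ) (r c : ℕ) : ℝ := coeffZ g ((c : ℤ) - (r : ℤ))

/-- Product of infinite matrices (defined via `tsum`; here each column of `T(g)` has
finitely many nonzero entries, so the sums are finite). -/
def matMul (A B : ℕ → ℕ → ℝ) (r c : ℕ) : ℝ := ∑' l, A r l * B l c

lemma key_conv (f ft g : ℕ → ℝ)
    (hf : ∀ n, f n = ∑ i ∈ Finset.range (n + 1), ft i * g (n - i)) (j c : ℕ) :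
    coeffZ f ((c : ℤ) - j) =
      ∑ l ∈ Finset.range (c + 1), coeffZ ft ((l : ℤ) - j) * coeffZ g ((c : ℤ) - l) := by
  by_cases hjc : j ≤ c
  · have hlhs : coeffZ f ((c : ℤ) - j) = f (c - j) := by
      unfold coeffZ
      rw [if_pos (by omega)]
      congr 1
      omega
    rw [hlhs, hf]
    have hsplit : Finset.range (c + 1) = Finset.Ico 0 j ∪ Finset.Ico j (c + 1) := by
      rw [Finset.range_eq_Ico, Finset.Ico_union_Ico_eq_Ico (by omega) (by omega)]
    rw [hsplit, Finset.sum_union (by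
      simp [Finset.disjoint_left]
      omega)]
    have h1 : ∑ l ∈ Finset.Ico 0 j, coeffZ ft ((l : ℤ) - j) * coeffZ g ((c : ℤ) - l) = 0 := by
      apply Finset.sum_eq_zero
      intro l hl
      simp only [Finset.mem_Ico] at hl
      have : coeffZ ft ((l : ℤ) - j) = 0 := by
        unfold coeffZ
        rw [if_neg (by omega)]
      rw [this, zero_mul]
    rw [h1, zero_add, Finset.sum_Ico_eq_sum_range]
    have hcr : c + 1 - j = c - j + 1 := by omega
    rw [hcr]
    apply Finset.sum_congr rfl
    intro i hi
    simp only [Finset.mem_range] at hi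
    have h2 : coeffZ ft ((j + i : ℕ) - (j : ℤ)) = ft i := by
      unfold coeffZ
      rw [if_pos (by push_cast; omega)]
      congr 1
      push_cast
      omega
    have h3 : coeffZ g ((c : ℤ) - (j + i : ℕ)) = g (c - j - i) := by
      unfold coeffZ
      rw [if_pos (by push_cast; omega)]
      congr 1
      push_cast
      omega
    rw [h2, h3]
  · have hlhs : coeffZ f ((c : ℤ) - j) = 0 := by
      unfold coeffZ
      rw [if_neg (by omega)]
    rw [hlhs]
    symm
    apply Finset.sum_eq_zero
    intro l hl
    simp only [Finset.mem_range] at hl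
    have : coeffZ ft ((l : ℤ) - j) = 0 := by
      unfold coeffZ
      rw [if_neg (by omega)]
    rw [this, zero_mul]

/-- If `g(0) = 1` and `p = p̃·g`, `q = q̃·g` as formal power series (Cauchy products),
then `H(p,q) = H(p̃,q̃) · T(g)`. -/
theorem stmt18 (a b g pt qt : ℕ → ℝ) (hg0 : g 0 = 1)
    (ha : ∀ n, a n = ∑ i ∈ Finset.range (n + 1), pt i * g (n - i))
    (hb : ∀ n, b n = ∑ i ∈ Finset.range (n + 1), qt i * g (n - i)) :
    ∀ r c : ℕ, Hmat a b r c = matMul (Hmat pt qt) (Tmat g) r c := by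
  intro r c
  have htsum : matMul (Hmat pt qt) (Tmat g) r c =
      ∑ l ∈ Finset.range (c + 1), Hmat pt qt r l * Tmat g l c := by
    apply tsum_eq_sum
    intro l hl
    simp only [Finset.mem_range, not_lt] at hl
    have : Tmat g l c = 0 := by
      unfold Tmat coeffZ
      rw [if_neg (by omega)]
    rw [this, mul_zero]
  rw [htsum]
  unfold Hmat Tmat
  by_cases hr : r % 2 = 0
  · simp only [if_pos hr]
    exact key_conv b qt g hb (r / 2) c
  · simp only [if_neg hr]
    have := key_conv a pt g ha (r / 2 + 1) c
    simpa [sub_sub] using this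

end
end
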